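/- Assume the uniform convergence λ_β^{-n} ℒ_β^n(f) → h_β · ∫ f dν_β with h_β continuous, positive, bounded below by c > 0. If ν is a probability satisfying ∫ f dν = ∫ ((ℒ_β^n f) ∘ T^n) Λ_n dν for all continuous f and all n, then the sequence ∫ λ_β^n Λ_n dν is bounded above by (∫ h_β dν)/c. -/
import Mathlib


open MeasureTheory Finset

/-- The full shift space `{1,…,k}^ℕ`, modeled as `ℕ → Fin k`. -/
abbrev ShiftSpace (k : ℕ) := ℕ → Fin k

/-- The left shift `T`. -/
def shiftT {k : ℕ} (x : ShiftSpace k) : ShiftSpace k := fun n => x (n + 1)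

/-- Prepending a symbol: the `k` preimages of `x` under the shift are `consS i x`. -/
def consS {k : ℕ} (i : Fin k) (x : ShiftSpace k) : ShiftSpace k :=
  fun n => Nat.casesOn n i x

/-- The Ruelle operator `ℒ_p f (x) = ∑_{T z = x} p z · f z` on complex functions. -/
noncomputable def ruelleOp {k : ℕ} (p : ShiftSpace k → ℝ) (f : ShiftSpace k → ℂ) :
    ShiftSpace k → ℂ :=
  fun x => ∑ i : Fin k, (p (consS i x) : ℂ) * f (consS i x)

/-- The Ruelle operator on real functions. -/
noncomputable def ruelleOpR {k : ℕ} (p : ShiftSpace k → ℝ) (f : ShiftSpace k → ℝ) :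
    ShiftSpace k → ℝ :=
  fun x => ∑ i : Fin k, p (consS i x) * f (consS i x)

/-- Hölder continuity with respect to the standard ultrametric on the shift space:
`|f x - f y| ≤ C · 2^{-α n}` whenever `x` and `y` agree on the first `n` coordinates. -/
def HolderSeq {k : ℕ} (f : ShiftSpace k → ℝ) : Prop :=
  ∃ C α : ℝ, 0 < α ∧ ∀ x y : ShiftSpace k, ∀ n : ℕ,
    (∀ m < n, x m = y m) → |f x - f y| ≤ C * (2 : ℝ) ^ (-(α * n))

/-- `λ^{-[n]}(x) = ∏_{i<n} p(T^i x)`. -/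
noncomputable def lamInv {k : ℕ} (p : ShiftSpace k → ℝ) (n : ℕ) (x : ShiftSpace k) : ℝ :=
  ∏ i ∈ Finset.range n, p (shiftT^[i] x)

/-- `H^{β[n]}(x) = ∏_{i<n} H(T^i x)^β`. -/
noncomputable def hPow {k : ℕ} (H : ShiftSpace k → ℝ) (β : ℝ) (n : ℕ)
    (x : ShiftSpace k) : ℝ :=
  ∏ i ∈ Finset.range n, H (shiftT^[i] x) ^ β

/-- `Λ_n = H^{-β[n]} · λ^{[n]}`. -/
noncomputable def lambdaN {k : ℕ} (p H : ShiftSpace k → ℝ) (β : ℝ) (n : ℕ)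
    (x : ShiftSpace k) : ℝ :=
  hPow H (-β) n x * (lamInv p n x)⁻¹

/-- The Ruelle operator `ℒ_{-β log H}` on real functions. -/
noncomputable def ruelleH {k : ℕ} (H : ShiftSpace k → ℝ) (β : ℝ) (f : ShiftSpace k → ℝ) :
    ShiftSpace k → ℝ :=
  fun x => ∑ i : Fin k, H (consS i x) ^ (-β) * f (consS i x)

section Aux

variable {k : ℕ}

lemma continuous_shiftT : Continuous (shiftT (k := k)) :=
  continuous_pi fun n => continuous_apply (n + 1)

lemma continuous_lamInv (p : ShiftSpace k → ℝ) (hp : Continuous p) (n : ℕ) :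
    Continuous (lamInv p n) :=
  continuous_finset_prod _ fun i _ => hp.comp (continuous_shiftT.iterate i)

lemma lamInv_pos (p : ShiftSpace k → ℝ) (hp : ∀ x, 0 < p x) (n : ℕ) (x : ShiftSpace k) :
    0 < lamInv p n x :=
  Finset.prod_pos fun _ _ => hp _

lemma continuous_hPow (H : ShiftSpace k → ℝ) (hH : Continuous H) (hpos : ∀ x, 0 < H x)
    (β : ℝ) (n : ℕ) : Continuous (hPow H β n) :=
  continuous_finset_prod _ fun i _ =>
    (hH.comp (continuous_shiftT.iterate i)).rpow_const fun _ => Or.inl (hpos _).ne'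

lemma hPow_pos (H : ShiftSpace k → ℝ) (hpos : ∀ x, 0 < H x) (β : ℝ) (n : ℕ)
    (x : ShiftSpace k) : 0 < hPow H β n x :=
  Finset.prod_pos fun _ _ => Real.rpow_pos_of_pos (hpos _) _

lemma continuous_lambdaN (p H : ShiftSpace k → ℝ) (hp : Continuous p) (hpp : ∀ x, 0 < p x)
    (hH : Continuous H) (hHp : ∀ x, 0 < H x) (β : ℝ) (n : ℕ) :
    Continuous (lambdaN p H β n) :=
  (continuous_hPow H hH hHp (-β) n).mul
    ((continuous_lamInv p hp n).inv₀ fun x => (lamInv_pos p hpp n x).ne')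

lemma lambdaN_nonneg (p H : ShiftSpace k → ℝ) (hpp : ∀ x, 0 < p x) (hHp : ∀ x, 0 < H x)
    (β : ℝ) (n : ℕ) (x : ShiftSpace k) : 0 ≤ lambdaN p H β n x :=
  mul_nonneg (hPow_pos H hHp (-β) n x).le (inv_nonneg.mpr (lamInv_pos p hpp n x).le)

end Aux

theorem integral_lambdaN_bounded {k : ℕ} [NeZero k]
    (p : ShiftSpace k → ℝ) (hp_cont : Continuous p) (hp_pos : ∀ x, 0 < p x)
    (hp_norm : ∀ x : ShiftSpace k, ∑ i : Fin k, p (consS i x) = 1)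
    (hp_hold : HolderSeq fun x => Real.log (p x))
    (H : ShiftSpace k → ℝ) (hH_cont : Continuous H) (hH_pos : ∀ x, 0 < H x)
    (hH_hold : HolderSeq fun x => Real.log (H x))
    (β lamβ : ℝ) (hlam : 0 < lamβ)
    (νβ : Measure (ShiftSpace k)) [IsProbabilityMeasure νβ]
    (hβf : ShiftSpace k → ℝ) (hβf_cont : Continuous hβf)
    (c : ℝ) (hc : 0 < c) (hβf_lb : ∀ x, c ≤ hβf x)
    (hβf_eig : ∀ n : ℕ, ∀ x, (ruelleH H β)^[n] hβf x = lamβ ^ n * hβf x)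
    (hRPF : ∀ f : ShiftSpace k → ℝ, Continuous f → ∀ ε > (0 : ℝ), ∃ N : ℕ,
      ∀ n ≥ N, ∀ x : ShiftSpace k,
        |(ruelleH H β)^[n] f x / lamβ ^ n - hβf x * ∫ y, f y ∂νβ| ≤ ε)
    (ν : Measure (ShiftSpace k)) [IsProbabilityMeasure ν]
    (hν : ∀ f : ShiftSpace k → ℝ, Continuous f → ∀ n : ℕ,
      ∫ x, f x ∂ν =
        ∫ x, ((ruelleH H β)^[n] f (shiftT^[n] x)) * lambdaN p H β n x ∂ν) :
    ∀ n : ℕ, ∫ x, lamβ ^ n * lambdaN p H β n x ∂ν ≤ (∫ x, hβf x ∂ν) / c := by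
  intro n
  have hΛcont := continuous_lambdaN p H hp_cont hp_pos hH_cont hH_pos β n
  have hΛnn := lambdaN_nonneg p H hp_pos hH_pos β n
  have key := hν hβf hβf_cont n
  simp only [hβf_eig] at key
  -- key : ∫ hβf = ∫ (lamβ ^ n * hβf (shiftT^[n] x)) * lambdaN ... x dν
  have hgcont : Continuous fun x => (lamβ ^ n * hβf (shiftT^[n] x)) * lambdaN p H β n x :=
    ((continuous_const.mul (hβf_cont.comp (continuous_shiftT.iterate n))).mul hΛcont)
  have hfcont : Continuous fun x => lamβ ^ n * lambdaN p H β n x :=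
    continuous_const.mul hΛcont
  have hfint : Integrable (fun x => lamβ ^ n * lambdaN p H β n x) ν := hfcont.integrable_of_hasCompactSupport (HasCompactSupport.of_compactSpace _)
  have hgint : Integrable (fun x => (lamβ ^ n * hβf (shiftT^[n] x)) * lambdaN p H β n x) ν :=
    hgcont.integrable_of_hasCompactSupport (HasCompactSupport.of_compactSpace _)
  have hmono : ∀ x, c * (lamβ ^ n * lambdaN p H β n x) ≤
      (lamβ ^ n * hβf (shiftT^[n] x)) * lambdaN p H β n x := by
    intro x
    have h1 : c * lamβ ^ n ≤ lamβ ^ n * hβf (shiftT^[n] x) := by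
      rw [mul_comm]
      exact mul_le_mul_of_nonneg_left (hβf_lb _) (pow_nonneg hlam.le n)
    calc c * (lamβ ^ n * lambdaN p H β n x) = (c * lamβ ^ n) * lambdaN p H β n x := by ring
      _ ≤ (lamβ ^ n * hβf (shiftT^[n] x)) * lambdaN p H β n x :=
        mul_le_mul_of_nonneg_right h1 (hΛnn x)
  have hle : c * ∫ x, lamβ ^ n * lambdaN p H β n x ∂ν ≤ ∫ x, hβf x ∂ν := by
    rw [key, ← integral_const_mul]
    exact integral_mono (hfint.const_mul c) hgint hmono
  rw [le_div_iff₀ hc, mul_comm]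
  exact hle
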